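/- Suppose s_n and t_n (n ≥ 1) are two sequences of real numbers in (e^{1/e}, ∞) such that for some u, c > e^{1/e} and all n: s_n ≤ u⋆n, t_n ≤ u⋆n, s_n ≥ c, and t_n ≥ c. Define S_1 = s_1, S_{n+1} = s_{n+1}^{S_n} and T_1 = t_1, T_{n+1} = t_{n+1}^{T_n}. Then there exists k ∈ ℕ such that for all n > k, S_{n−k} ≤ T_n ≤ S_{n+k}. -/
import Mathlib


/-- Tetration `c ⋆ n`. -/
noncomputable def tet (c : ℝ) : ℕ → ℝ
  | 0 => 1
  | n + 1 => c ^ tet c n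

/-- The tower `S n = s n ^ (s (n-1) ^ (⋯ ^ (s 1)))` built from the bottom entry
`s 1` upward: `S 0 = 1`, `S (n+1) = s (n+1) ^ S n`. -/
noncomputable def towerUp (s : ℕ → ℝ) : ℕ → ℝ
  | 0 => 1
  | n + 1 => s (n + 1) ^ towerUp s n

lemma aux_tet_one_le {c : ℝ} (hc : 1 ≤ c) : ∀ n, 1 ≤ tet c n := by
  intro n
  induction n with
  | zero => simp [tet]
  | succ n ih =>
    show (1:ℝ) ≤ c ^ tet c n
    calc (1:ℝ) = c ^ (0:ℝ) := (Real.rpow_zero c).symm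
    _ ≤ c ^ tet c n := Real.rpow_le_rpow_of_exponent_le hc (by linarith)

lemma aux_tet_base_le {w : ℝ} (hw : 1 ≤ w) : ∀ n, 1 ≤ n → w ≤ tet w n := by
  intro n hn
  obtain ⟨m, rfl⟩ := Nat.exists_eq_add_of_le hn
  rw [add_comm]
  show w ≤ w ^ tet w m
  calc w = w ^ (1:ℝ) := (Real.rpow_one w).symm
  _ ≤ w ^ tet w m := Real.rpow_le_rpow_of_exponent_le hw (aux_tet_one_le hw m)

lemma aux_tet_mono {u w : ℝ} (hu : 1 ≤ u) (huw : u ≤ w) : ∀ n, tet u n ≤ tet w n := by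
  intro n
  induction n with
  | zero => simp [tet]
  | succ n ih =>
    show u ^ tet u n ≤ w ^ tet w n
    calc u ^ tet u n ≤ w ^ tet u n :=
          Real.rpow_le_rpow (by linarith) huw (by linarith [aux_tet_one_le hu n])
    _ ≤ w ^ tet w n := Real.rpow_le_rpow_of_exponent_le (by linarith) ih

lemma aux_tower_one_le {a : ℕ → ℝ} (ha : ∀ n ≥ 1, 1 ≤ a n) : ∀ n, 1 ≤ towerUp a n := by
  intro n
  induction n with
  | zero => simp [towerUp]
  | succ n ih =>
    show (1:ℝ) ≤ a (n+1) ^ towerUp a n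
    have h1 : 1 ≤ a (n+1) := ha (n+1) (by omega)
    calc (1:ℝ) = a (n+1) ^ (0:ℝ) := (Real.rpow_zero _).symm
    _ ≤ a (n+1) ^ towerUp a n := Real.rpow_le_rpow_of_exponent_le h1 (by linarith)

lemma aux_tet_le_tower {c : ℝ} {a : ℕ → ℝ} (hc : 1 ≤ c) (ha : ∀ n ≥ 1, c ≤ a n) :
    ∀ n, tet c n ≤ towerUp a n := by
  intro n
  induction n with
  | zero => simp [tet, towerUp]
  | succ n ih =>
    show c ^ tet c n ≤ a (n+1) ^ towerUp a n
    have h1 : c ≤ a (n+1) := ha (n+1) (by omega)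
    calc c ^ tet c n ≤ a (n+1) ^ tet c n :=
          Real.rpow_le_rpow (by linarith) h1 (by linarith [aux_tet_one_le hc n])
    _ ≤ a (n+1) ^ towerUp a n := Real.rpow_le_rpow_of_exponent_le (by linarith) ih

lemma aux_x_le_exp (x : ℝ) : x ≤ Real.exp (x / Real.exp 1) := by
  have h := Real.add_one_le_exp (x / Real.exp 1 - 1)
  have he : (0:ℝ) < Real.exp 1 := Real.exp_pos 1
  have h2 : Real.exp (x / Real.exp 1) = Real.exp 1 * Real.exp (x / Real.exp 1 - 1) := by
    rw [← Real.exp_add]; ring_nf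
  have h3 : Real.exp 1 * (x / Real.exp 1) = x := by field_simp
  nlinarith [mul_le_mul_of_nonneg_left h (le_of_lt he)]

lemma aux_rx_le {c : ℝ} (hc : Real.exp (1 / Real.exp 1) < c) {x : ℝ} (hx : 1 ≤ x) :
    (c / Real.exp (1 / Real.exp 1)) * x ≤ c ^ x := by
  set E := Real.exp (1 / Real.exp 1) with hE
  have hE0 : (0:ℝ) < E := Real.exp_pos _
  have hc0 : (0:ℝ) < c := lt_trans hE0 hc
  have hr1 : (1:ℝ) ≤ c / E := le_of_lt ((one_lt_div hE0).mpr hc)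
  have hlogr : Real.log (c / E) = Real.log c - 1 / Real.exp 1 := by
    rw [Real.log_div (ne_of_gt hc0) (ne_of_gt hE0), hE, Real.log_exp]
  have h1 : x ≤ Real.exp (x / Real.exp 1) := aux_x_le_exp x
  have h2 : c / E ≤ Real.exp (x * Real.log (c / E)) := by
    calc c / E = Real.exp (Real.log (c / E)) := (Real.exp_log (by positivity)).symm
    _ ≤ Real.exp (x * Real.log (c / E)) := by
        apply Real.exp_le_exp.mpr
        have : 0 ≤ Real.log (c / E) := Real.log_nonneg hr1
        nlinarith
  have hcx : c ^ x = Real.exp (x / Real.exp 1) * Real.exp (x * Real.log (c / E)) := by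
    rw [← Real.exp_add, Real.rpow_def_of_pos hc0, hlogr]; ring_nf
  rw [hcx]
  have hx0 : (0:ℝ) ≤ x := by linarith
  have := mul_le_mul h2 h1 (by linarith) (le_of_lt (Real.exp_pos _))
  nlinarith [Real.exp_pos (x / Real.exp 1), Real.exp_pos (x * Real.log (c / E))]

lemma aux_geom {c : ℝ} (hc : Real.exp (1 / Real.exp 1) < c) :
    ∀ n, (c / Real.exp (1 / Real.exp 1)) ^ n ≤ tet c n := by
  have hE0 : (0:ℝ) < Real.exp (1 / Real.exp 1) := Real.exp_pos _
  have hr1 : (1:ℝ) ≤ c / Real.exp (1 / Real.exp 1) := le_of_lt ((one_lt_div hE0).mpr hc)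
  have hc1 : (1:ℝ) ≤ c := by
    have : (1:ℝ) < Real.exp (1 / Real.exp 1) := by
      calc (1:ℝ) = Real.exp 0 := Real.exp_zero.symm
      _ < Real.exp (1 / Real.exp 1) := Real.exp_lt_exp.mpr (by positivity)
    linarith
  intro n
  induction n with
  | zero => simp [tet]
  | succ n ih =>
    show _ ≤ c ^ tet c n
    have h1 : 1 ≤ tet c n := aux_tet_one_le hc1 n
    calc (c / Real.exp (1 / Real.exp 1)) ^ (n+1)
        = (c / Real.exp (1 / Real.exp 1)) * (c / Real.exp (1 / Real.exp 1)) ^ n := by ring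
    _ ≤ (c / Real.exp (1 / Real.exp 1)) * tet c n := by
        apply mul_le_mul_of_nonneg_left ih (by linarith)
    _ ≤ c ^ tet c n := aux_rx_le hc h1

lemma aux_logw {w : ℝ} (hw : 64 * Real.exp 1 ^ 2 ≤ w) :
    4 * Real.log w ≤ w / Real.exp 1 := by
  have he : (0:ℝ) < Real.exp 1 := Real.exp_pos 1
  have hw0 : (0:ℝ) < w := by nlinarith
  have hsq : Real.sqrt (64 * Real.exp 1 ^ 2) = 8 * Real.exp 1 := by
    rw [show (64:ℝ) * Real.exp 1 ^ 2 = (8 * Real.exp 1)^2 by ring, Real.sqrt_sq (by positivity)]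
  have h8e : 8 * Real.exp 1 ≤ Real.sqrt w := by
    rw [← hsq]; exact Real.sqrt_le_sqrt hw
  have hlog : Real.log w = 2 * Real.log (Real.sqrt w) := by
    rw [Real.log_sqrt (le_of_lt hw0)]; ring
  have hls : Real.log (Real.sqrt w) ≤ Real.sqrt w - 1 :=
    Real.log_le_sub_one_of_pos (Real.sqrt_pos.mpr hw0)
  have hsw : Real.sqrt w * Real.sqrt w = w := Real.mul_self_sqrt (le_of_lt hw0)
  rw [hlog, le_div_iff₀ he]
  nlinarith [Real.sqrt_nonneg w,
    mul_le_mul_of_nonneg_left hls (by positivity : (0:ℝ) ≤ 8 * Real.exp 1),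
    mul_le_mul_of_nonneg_right h8e (Real.sqrt_nonneg w)]

lemma aux_inv {c w : ℝ} {a : ℕ → ℝ} {k : ℕ}
    (hc : Real.exp (1 / Real.exp 1) < c)
    (hw : 64 * Real.exp 1 ^ 2 ≤ w)
    (ha1 : ∀ n ≥ 1, 1 ≤ a n)
    (haw : ∀ n ≥ 1, a n ≤ tet w n)
    (hk1 : w ^ (4:ℕ) ≤ tet c (k + 1)) :
    ∀ n, (tet w n * towerUp a n) ^ (2:ℕ) ≤ tet c (n + k) := by
  have he : (0:ℝ) < Real.exp 1 := Real.exp_pos 1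
  have hE1 : (1:ℝ) < Real.exp (1 / Real.exp 1) := by
    calc (1:ℝ) = Real.exp 0 := Real.exp_zero.symm
    _ < Real.exp (1 / Real.exp 1) := Real.exp_lt_exp.mpr (by positivity)
  have hc1 : (1:ℝ) < c := lt_trans hE1 hc
  have hc0 : (0:ℝ) < c := by linarith
  have hlc : 1 / Real.exp 1 < Real.log c := by
    have := Real.log_lt_log (Real.exp_pos _) hc
    rwa [Real.log_exp] at this
  have he2 : (2:ℝ) ≤ Real.exp 1 := by linarith [Real.add_one_le_exp 1]
  have hw1 : (1:ℝ) < w := by nlinarith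
  have hw0 : (0:ℝ) < w := by linarith
  have hlogw := aux_logw hw
  intro n
  induction n with
  | zero =>
    simp only [tet, towerUp, zero_add]
    norm_num
    exact aux_tet_one_le (le_of_lt hc1) k
  | succ n ih =>
    rcases Nat.eq_zero_or_pos n with rfl | hn
    · -- n = 1 case
      have ht1 : tet w 1 = w := by
        show w ^ tet w 0 = w
        show w ^ (1:ℝ) = w
        exact Real.rpow_one w
      have hT1 : towerUp a 1 = a 1 := by
        show a 1 ^ towerUp a 0 = a 1
        show a 1 ^ (1:ℝ) = a 1
        exact Real.rpow_one _
      rw [ht1, hT1]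
      have ha1' : 1 ≤ a 1 := ha1 1 le_rfl
      have haw' : a 1 ≤ w := by have := haw 1 le_rfl; rwa [ht1] at this
      have hww : w * a 1 ≤ w * w := by nlinarith
      calc (w * a 1) ^ (2:ℕ) ≤ (w * w) ^ (2:ℕ) :=
            pow_le_pow_left₀ (by positivity) hww 2
      _ = w ^ (4:ℕ) := by ring
      _ ≤ tet c (k + 1) := hk1
      _ = tet c (1 + k) := by rw [add_comm]
    · -- n ≥ 1 inductive step
      set X := tet w n * towerUp a n with hX
      have hU1 : 1 ≤ tet w n := aux_tet_one_le (le_of_lt hw1) n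
      have hUw : w ≤ tet w n := aux_tet_base_le (le_of_lt hw1) n hn
      have hT1 : 1 ≤ towerUp a n := aux_tower_one_le ha1 n
      have hXw : w ≤ X := by
        calc w ≤ tet w n := hUw
        _ ≤ X := le_mul_of_one_le_right (by linarith) hT1
      have hX1 : (1:ℝ) ≤ X := by linarith
      have hD : X ^ (2:ℕ) ≤ tet c (n + k) := ih
      have hstep1 : towerUp a (n+1) ≤ w ^ X := by
        show a (n+1) ^ towerUp a n ≤ w ^ X
        calc a (n+1) ^ towerUp a n ≤ (w ^ tet w n) ^ towerUp a n := by
              apply Real.rpow_le_rpow (by linarith [ha1 (n+1) (by omega)])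
                (haw (n+1) (by omega)) (by linarith)
        _ = w ^ X := (Real.rpow_mul (le_of_lt hw0) _ _).symm
      have hstep2 : tet w (n+1) ≤ w ^ X := by
        show w ^ tet w n ≤ w ^ X
        apply Real.rpow_le_rpow_of_exponent_le (le_of_lt hw1)
        exact le_mul_of_one_le_right (by linarith) hT1
      have hX0 : (0:ℝ) ≤ X := by linarith
      have hwX0 : (0:ℝ) ≤ w ^ X := le_of_lt (Real.rpow_pos_of_pos hw0 X)
      have htw0 : (0:ℝ) ≤ tet w (n+1) := by
        linarith [aux_tet_one_le (le_of_lt hw1) (n+1)]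
      have hta0 : (0:ℝ) ≤ towerUp a (n+1) := by linarith [aux_tower_one_le ha1 (n+1)]
      have hprod : tet w (n+1) * towerUp a (n+1) ≤ w ^ (X + X) := by
        rw [Real.rpow_add hw0]
        exact mul_le_mul hstep2 hstep1 hta0 hwX0
      have key : 4 * Real.log w ≤ X * Real.log c := by
        have h1 : w / Real.exp 1 ≤ X / Real.exp 1 := (div_le_div_iff_of_pos_right he).mpr hXw
        have h2 : X / Real.exp 1 ≤ X * Real.log c := by
          rw [div_eq_mul_inv]
          apply mul_le_mul_of_nonneg_left _ hX0
          rw [← one_div]; exact le_of_lt hlc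
        linarith
      have hne : n + 1 + k = (n + k) + 1 := by omega
      rw [hne]
      show _ ≤ c ^ tet c (n + k)
      calc (tet w (n+1) * towerUp a (n+1)) ^ (2:ℕ)
          ≤ (w ^ (X + X)) ^ (2:ℕ) :=
            pow_le_pow_left₀ (mul_nonneg htw0 hta0) hprod 2
      _ = w ^ (4 * X) := by
          rw [pow_two, ← Real.rpow_add hw0]; ring_nf
      _ ≤ c ^ (X * X) := by
          rw [Real.rpow_def_of_pos hw0, Real.rpow_def_of_pos hc0]
          apply Real.exp_le_exp.mpr
          nlinarith [mul_le_mul_of_nonneg_left key hX0]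
      _ ≤ c ^ tet c (n + k) := by
          apply Real.rpow_le_rpow_of_exponent_le (le_of_lt hc1)
          calc X * X = X ^ (2:ℕ) := (pow_two X).symm
          _ ≤ tet c (n + k) := hD

theorem stmt_8 (s t : ℕ → ℝ) (u c : ℝ)
    (hu : Real.exp (1 / Real.exp 1) < u) (hc : Real.exp (1 / Real.exp 1) < c)
    (hs_mem : ∀ n ≥ 1, s n ∈ Set.Ioi (Real.exp (1 / Real.exp 1)))
    (ht_mem : ∀ n ≥ 1, t n ∈ Set.Ioi (Real.exp (1 / Real.exp 1)))
    (hs_ub : ∀ n ≥ 1, s n ≤ tet u n) (ht_ub : ∀ n ≥ 1, t n ≤ tet u n)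
    (hs_lb : ∀ n ≥ 1, c ≤ s n) (ht_lb : ∀ n ≥ 1, c ≤ t n) :
    ∃ k : ℕ, ∀ n > k, towerUp s (n - k) ≤ towerUp t n ∧ towerUp t n ≤ towerUp s (n + k) := by
  have hE1 : (1:ℝ) < Real.exp (1 / Real.exp 1) := by
    calc (1:ℝ) = Real.exp 0 := Real.exp_zero.symm
    _ < Real.exp (1 / Real.exp 1) := Real.exp_lt_exp.mpr (by positivity)
  have hc1 : (1:ℝ) < c := lt_trans hE1 hc
  have hu1 : (1:ℝ) < u := lt_trans hE1 hu
  set w := max u (64 * Real.exp 1 ^ 2) with hwdef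
  have hw : 64 * Real.exp 1 ^ 2 ≤ w := le_max_right _ _
  have huw : u ≤ w := le_max_left _ _
  have hr1 : (1:ℝ) < c / Real.exp (1 / Real.exp 1) :=
    (one_lt_div (Real.exp_pos _)).mpr hc
  obtain ⟨k, hk⟩ := pow_unbounded_of_one_lt (w ^ (4:ℕ)) hr1
  have hk1 : w ^ (4:ℕ) ≤ tet c (k + 1) := by
    calc w ^ (4:ℕ) ≤ (c / Real.exp (1 / Real.exp 1)) ^ k := le_of_lt hk
    _ ≤ (c / Real.exp (1 / Real.exp 1)) ^ (k+1) :=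
        pow_le_pow_right₀ (le_of_lt hr1) (by omega)
    _ ≤ tet c (k+1) := aux_geom hc (k+1)
  have hs1 : ∀ n ≥ 1, 1 ≤ s n := fun n hn => le_of_lt (lt_of_lt_of_le hc1 (hs_lb n hn))
  have ht1 : ∀ n ≥ 1, 1 ≤ t n := fun n hn => le_of_lt (lt_of_lt_of_le hc1 (ht_lb n hn))
  have hsw : ∀ n ≥ 1, s n ≤ tet w n :=
    fun n hn => (hs_ub n hn).trans (aux_tet_mono (le_of_lt hu1) huw n)
  have htw : ∀ n ≥ 1, t n ≤ tet w n :=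
    fun n hn => (ht_ub n hn).trans (aux_tet_mono (le_of_lt hu1) huw n)
  have hw1 : (1:ℝ) < w := lt_of_lt_of_le hu1 huw
  have bound : ∀ (a : ℕ → ℝ), (∀ n ≥ 1, 1 ≤ a n) → (∀ n ≥ 1, a n ≤ tet w n) →
      ∀ m, towerUp a m ≤ tet c (m + k) := by
    intro a ha1 haw m
    have hU1 : 1 ≤ tet w m := aux_tet_one_le (le_of_lt hw1) m
    have hT1 : 1 ≤ towerUp a m := aux_tower_one_le ha1 m
    calc towerUp a m ≤ tet w m * towerUp a m := le_mul_of_one_le_left (by linarith) hU1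
    _ ≤ (tet w m * towerUp a m) ^ (2:ℕ) :=
        le_self_pow₀ (by nlinarith) (by norm_num)
    _ ≤ tet c (m + k) := aux_inv hc hw ha1 haw hk1 m
  refine ⟨k, fun n hn => ⟨?_, ?_⟩⟩
  · have h1 : towerUp s (n - k) ≤ tet c ((n - k) + k) := bound s hs1 hsw (n - k)
    rw [Nat.sub_add_cancel (le_of_lt hn)] at h1
    exact h1.trans (aux_tet_le_tower (le_of_lt hc1) ht_lb n)
  · exact (bound t ht1 htw n).trans (aux_tet_le_tower (le_of_lt hc1) hs_lb (n + k))
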